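/- (Weak solutions are strong solutions — elliptic regularity step.) Let V : H → H be a bounded linear operator and f ∈ H. If u ∈ D_{s/2} satisfies ⟨A_{s/2} u, A_{s/2} v⟩ + ⟨V u, v⟩ = ⟨f, v⟩ for every v ∈ D_{s/2}, then u ∈ D_s and A_s u + V u = f. -/

import Mathlib

open scoped RealInnerProductSpace

/-- The fractional domain `D_σ = {u : Σₖ λₖ^{2σ} ⟨u,φₖ⟩² < ∞}`. -/
noncomputable def Dom {H : Type*} [NormedAddCommGroup H] [InnerProductSpace ℝ H]
    [CompleteSpace H] (φ : HilbertBasis ℕ ℝ H) (lam : ℕ → ℝ) (σ : ℝ) : Set H :=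
  {u | Summable fun k => lam k ^ (2 * σ) * ⟪u, φ k⟫ ^ 2}

/-- The spectral fractional power `A_σ u = Σₖ λₖ^σ ⟨u,φₖ⟩ φₖ`. -/
noncomputable def Aop {H : Type*} [NormedAddCommGroup H] [InnerProductSpace ℝ H]
    [CompleteSpace H] (φ : HilbertBasis ℕ ℝ H) (lam : ℕ → ℝ) (σ : ℝ) (u : H) : H :=
  ∑' k, (lam k ^ σ * ⟪u, φ k⟫) • φ k

/-- From square-summable coefficients, build the vector with those coefficients. -/
lemma exists_hasSum_coeffs {H : Type*} [NormedAddCommGroup H] [InnerProductSpace ℝ H]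
    [CompleteSpace H] (φ : HilbertBasis ℕ ℝ H) (c : ℕ → ℝ)
    (hc : Summable fun k => c k ^ 2) :
    ∃ x : H, HasSum (fun k => c k • φ k) x ∧ ∀ j, ⟪x, φ j⟫ = c j := by
  have hmem : Memℓp c 2 := by
    apply memℓp_gen
    have h2 : ∀ k, ‖c k‖ ^ (2 : ENNReal).toReal = c k ^ 2 := by
      intro k
      rw [ENNReal.toReal_ofNat, Real.rpow_two, Real.norm_eq_abs, sq_abs]
    simp only [h2] at hc ⊢
    exact hc
  refine ⟨φ.repr.symm ⟨c, hmem⟩, ?_, ?_⟩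
  · simpa using φ.hasSum_repr_symm ⟨c, hmem⟩
  · intro j
    rw [real_inner_comm, ← φ.repr_apply_apply]
    simp

/-- Parseval: the coefficients of any vector are square-summable. -/
lemma summable_coeffs_sq {H : Type*} [NormedAddCommGroup H] [InnerProductSpace ℝ H]
    [CompleteSpace H] (φ : HilbertBasis ℕ ℝ H) (g : H) :
    Summable fun k => ⟪g, φ k⟫ ^ 2 := by
  have h := (lp.memℓp (φ.repr g)).summable (p := 2) (by norm_num)
  have h2 : ∀ k, ‖φ.repr g k‖ ^ (2 : ENNReal).toReal = ⟪g, φ k⟫ ^ 2 := by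
    intro k
    rw [ENNReal.toReal_ofNat, Real.rpow_two, Real.norm_eq_abs, sq_abs,
      φ.repr_apply_apply, real_inner_comm]
  simp only [h2] at h
  exact h

lemma summable_sq_of_mem_Dom {H : Type*} [NormedAddCommGroup H] [InnerProductSpace ℝ H]
    [CompleteSpace H] (φ : HilbertBasis ℕ ℝ H) (lam : ℕ → ℝ) (hlam : ∀ k, 0 ≤ lam k)
    (σ : ℝ) (u : H) (hu : u ∈ Dom φ lam σ) :
    Summable fun k => (lam k ^ σ * ⟪u, φ k⟫) ^ 2 := by
  have h2 : ∀ k, (lam k ^ σ * ⟪u, φ k⟫) ^ 2 = lam k ^ (2 * σ) * ⟪u, φ k⟫ ^ 2 := by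
    intro k
    rw [mul_pow, ← Real.rpow_natCast (lam k ^ σ) 2, ← Real.rpow_mul (hlam k)]
    norm_num [mul_comm]
  simpa [h2] using (show Summable fun k => lam k ^ (2 * σ) * ⟪u, φ k⟫ ^ 2 from hu)

/-- Coefficient extraction for `Aop`. -/
lemma Aop_spec {H : Type*} [NormedAddCommGroup H] [InnerProductSpace ℝ H]
    [CompleteSpace H] (φ : HilbertBasis ℕ ℝ H) (lam : ℕ → ℝ) (hlam : ∀ k, 0 ≤ lam k)
    (σ : ℝ) (u : H) (hu : u ∈ Dom φ lam σ) (j : ℕ) :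
    ⟪Aop φ lam σ u, φ j⟫ = lam j ^ σ * ⟪u, φ j⟫ := by
  obtain ⟨x, hx, hco⟩ := exists_hasSum_coeffs φ _ (summable_sq_of_mem_Dom φ lam hlam σ u hu)
  have hAx : Aop φ lam σ u = x := hx.tsum_eq
  rw [hAx, hco]

lemma Aop_basis {H : Type*} [NormedAddCommGroup H] [InnerProductSpace ℝ H]
    [CompleteSpace H] (φ : HilbertBasis ℕ ℝ H) (lam : ℕ → ℝ) (σ : ℝ) (j : ℕ) :
    Aop φ lam σ (φ j) = lam j ^ σ • φ j := by
  have horth := orthonormal_iff_ite.mp φ.orthonormal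
  rw [Aop, tsum_eq_single j]
  · rw [horth j j]; simp
  · intro k hk
    rw [horth j k]
    simp [hk.symm]

lemma basis_mem_Dom {H : Type*} [NormedAddCommGroup H] [InnerProductSpace ℝ H]
    [CompleteSpace H] (φ : HilbertBasis ℕ ℝ H) (lam : ℕ → ℝ) (σ : ℝ) (j : ℕ) :
    φ j ∈ Dom φ lam σ := by
  have horth := orthonormal_iff_ite.mp φ.orthonormal
  apply summable_of_ne_finset_zero (s := {j})
  intro k hk
  simp only [Finset.mem_singleton] at hk
  rw [horth j k]
  simp [Ne.symm hk]

theorem statement12 {H : Type*} [NormedAddCommGroup H] [InnerProductSpace ℝ H]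
    [CompleteSpace H] (φ : HilbertBasis ℕ ℝ H) (lam : ℕ → ℝ) (hlam : ∀ k, 0 ≤ lam k)
    (s : ℝ) (hs : 0 < s) (V : H →L[ℝ] H) (f : H)
    (u : H) (hu : u ∈ Dom φ lam (s / 2))
    (hweak : ∀ v ∈ Dom φ lam (s / 2),
      ⟪Aop φ lam (s / 2) u, Aop φ lam (s / 2) v⟫ + ⟪V u, v⟫ = ⟪f, v⟫) :
    u ∈ Dom φ lam s ∧ Aop φ lam s u + V u = f := by
  set g : H := f - V u with hg
  have hsq : ∀ j : ℕ, lam j ^ (s / 2) * lam j ^ (s / 2) = lam j ^ s := by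
    intro j
    rw [← Real.rpow_add' (hlam j) (by rw [add_halves]; exact ne_of_gt hs), add_halves]
  have key : ∀ j : ℕ, ⟪g, φ j⟫ = lam j ^ s * ⟪u, φ j⟫ := by
    intro j
    have h := hweak (φ j) (basis_mem_Dom φ lam (s / 2) j)
    rw [Aop_basis, real_inner_smul_right, Aop_spec φ lam hlam _ u hu j] at h
    rw [hg, inner_sub_left]
    rw [← mul_assoc, hsq j] at h
    linarith
  have hdom : u ∈ Dom φ lam s := by
    have h2 : ∀ k, lam k ^ (2 * s) * ⟪u, φ k⟫ ^ 2 = ⟪g, φ k⟫ ^ 2 := by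
      intro k
      rw [key k, mul_pow, ← Real.rpow_natCast (lam k ^ s) 2, ← Real.rpow_mul (hlam k)]
      norm_num [mul_comm]
    unfold Dom
    simp only [Set.mem_setOf_eq, h2]
    exact summable_coeffs_sq φ g
  refine ⟨hdom, ?_⟩
  have hAg : Aop φ lam s u = g := by
    have hrepr := φ.hasSum_repr g
    have h2 : ∀ k, (lam k ^ s * ⟪u, φ k⟫) • φ k = φ.repr g k • φ k := by
      intro k
      congr 1
      rw [φ.repr_apply_apply]
      exact ((real_inner_comm g (φ k)).trans (key k)).symm
    exact (tsum_congr h2).trans hrepr.tsum_eq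
  rw [hAg, hg, sub_add_cancel]
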